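/- If Π is a finite group of measurable transformations containing the identity, and S(Z^π) has the same joint distribution for all relabelings induced by Π (exchangeability), then the randomization p-value p̂ = (1/n) Σ_{π∈Π} 1{S(Z^π) ≥ S(Z)} satisfies P(p̂ ≤ α) ≤ α for every α ∈ (0,1). -/
import Mathlib


open MeasureTheory

/-- Combinatorial key lemma: the number of `τ` whose "rank count"
`#{σ | x σ ≥ x τ}` is at most `c` is itself at most `c`. -/
lemma rank_count_le {G : Type*} [Fintype G] (x : G → ℝ) (c : ℝ) (hc : 0 ≤ c) :
    ((Finset.univ.filter (fun τ : G =>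
        ((Finset.univ.filter (fun σ : G => x τ ≤ x σ)).card : ℝ) ≤ c)).card : ℝ) ≤ c := by
  set A := Finset.univ.filter (fun τ : G =>
      ((Finset.univ.filter (fun σ : G => x τ ≤ x σ)).card : ℝ) ≤ c) with hA
  rcases A.eq_empty_or_nonempty with h | h
  · simp [h, hc]
  · obtain ⟨τ₀, hτ₀A, hτ₀min⟩ := A.exists_min_image x h
    have hsub : A ⊆ Finset.univ.filter (fun σ : G => x τ₀ ≤ x σ) := by
      intro τ hτ
      simp only [Finset.mem_filter, Finset.mem_univ, true_and]
      exact hτ₀min τ hτ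
    have h1 : (A.card : ℝ) ≤
        ((Finset.univ.filter (fun σ : G => x τ₀ ≤ x σ)).card : ℝ) := by
      exact_mod_cast Finset.card_le_card hsub
    have h2 := (Finset.mem_filter.mp hτ₀A).2
    linarith

/-- If `Π` is a finite group of transformations containing the identity
(modeled by a finite group `G`, where `s σ ω = S(Z^σ)(ω)` and the identity `1 ∈ G`
corresponds to `Z = Z^id`), and the joint distribution of `(S(Z^{π∘σ}))_{σ∈Π}` equals
that of `(S(Z^σ))_{σ∈Π}` for each `π ∈ Π` (exchangeability), then the randomization
p-value `p̂ = n⁻¹ Σ_{π∈Π} 1{S(Z^π) ≥ S(Z)}` satisfies `P(p̂ ≤ α) ≤ α` for `α ∈ (0,1)`. -/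
theorem stmt4 {Ω : Type*} [MeasurableSpace Ω] (μ : Measure Ω) [IsProbabilityMeasure μ]
    {G : Type*} [Group G] [Fintype G]
    (s : G → Ω → ℝ) (hmeas : ∀ σ : G, Measurable (s σ))
    (hexch : ∀ π : G,
      μ.map (fun ω => fun σ : G => s (π * σ) ω) = μ.map (fun ω => fun σ : G => s σ ω))
    (α : ℝ) (hα0 : 0 < α) (hα1 : α < 1) :
    μ {ω | (∑ π : G, (if s π ω ≥ s 1 ω then (1 : ℝ) else 0)) / (Fintype.card G : ℝ) ≤ α}
      ≤ ENNReal.ofReal α := by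
  classical
  set n := Fintype.card G with hn
  have hnpos : 0 < n := Fintype.card_pos
  have hnposR : (0 : ℝ) < (n : ℝ) := by exact_mod_cast hnpos
  -- the joint vector
  set V : Ω → (G → ℝ) := fun ω σ => s σ ω with hV
  have hVmeas : Measurable V := measurable_pi_lambda _ hmeas
  -- shifted p-values
  set F : G → (G → ℝ) → ℝ :=
    fun τ x => (∑ π : G, (if x (τ * π) ≥ x τ then (1 : ℝ) else 0)) / (n : ℝ) with hF
  have hFmeas : ∀ τ : G, Measurable (F τ) := by
    intro τ
    apply Measurable.div_const
    apply Finset.measurable_sum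
    intro π _
    exact Measurable.ite
      (measurableSet_le (measurable_pi_apply τ) (measurable_pi_apply (τ * π)))
      measurable_const measurable_const
  have hFset : MeasurableSet {x : G → ℝ | F 1 x ≤ α} :=
    measurableSet_le (hFmeas 1) measurable_const
  -- relabeling maps
  have hkey : ∀ τ : G, μ {ω | F τ (V ω) ≤ α} = μ {ω | F 1 (V ω) ≤ α} := by
    intro τ
    set r : (G → ℝ) → (G → ℝ) := fun x σ => x (τ * σ) with hr
    have hrmeas : Measurable r :=
      measurable_pi_lambda _ (fun σ => measurable_pi_apply (τ * σ))
    have hcomp : ∀ x : G → ℝ, F τ x = F 1 (r x) := by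
      intro x
      simp [hF, hr, one_mul]
    have h1 : {ω | F τ (V ω) ≤ α} = (r ∘ V) ⁻¹' {x | F 1 x ≤ α} := by
      ext ω; simp [hcomp, Set.mem_preimage]
    have h2 : {ω | F 1 (V ω) ≤ α} = V ⁻¹' {x | F 1 x ≤ α} := rfl
    rw [h1, h2, ← Measure.map_apply (hrmeas.comp hVmeas) hFset,
      ← Measure.map_apply hVmeas hFset]
    congr 1
    have : r ∘ V = fun ω => fun σ : G => s (τ * σ) ω := rfl
    rw [this]
    exact hexch τ
  -- events
  set E : G → Set Ω := fun τ => {ω | F τ (V ω) ≤ α} with hE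
  have hEmeas : ∀ τ, MeasurableSet (E τ) := by
    intro τ
    exact measurableSet_le ((hFmeas τ).comp hVmeas) measurable_const
  -- pointwise combinatorial bound
  have hpt : ∀ ω : Ω,
      (∑ τ : G, (E τ).indicator (fun _ => (1 : ENNReal)) ω) ≤ ENNReal.ofReal ((n : ℝ) * α) := by
    intro ω
    have hsum : (∑ τ : G, (E τ).indicator (fun _ => (1 : ENNReal)) ω)
        = ((Finset.univ.filter (fun τ : G => F τ (V ω) ≤ α)).card : ENNReal) := by
      rw [← Finset.sum_boole]
      apply Finset.sum_congr rfl
      intro τ _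
      simp [hE, Set.indicator_apply]
    rw [hsum]
    -- rewrite the condition F τ (V ω) ≤ α as a rank condition
    have hcond : ∀ τ : G, (F τ (V ω) ≤ α) ↔
        ((Finset.univ.filter (fun σ : G => V ω τ ≤ V ω σ)).card : ℝ) ≤ (n : ℝ) * α := by
      intro τ
      have hbij : (∑ π : G, (if V ω (τ * π) ≥ V ω τ then (1 : ℝ) else 0))
          = ∑ σ : G, (if V ω σ ≥ V ω τ then (1 : ℝ) else 0) :=
        Fintype.sum_equiv (Equiv.mulLeft τ) _ _ (fun π => rfl)
      have hcard : (∑ σ : G, (if V ω σ ≥ V ω τ then (1 : ℝ) else 0))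
          = ((Finset.univ.filter (fun σ : G => V ω τ ≤ V ω σ)).card : ℝ) := by
        rw [← Finset.sum_boole]
      constructor
      · intro h
        rw [hF] at h
        rw [← hcard, ← hbij]
        calc (∑ π : G, (if V ω (τ * π) ≥ V ω τ then (1 : ℝ) else 0))
            = ((∑ π : G, (if V ω (τ * π) ≥ V ω τ then (1 : ℝ) else 0)) / (n : ℝ)) * (n : ℝ) := by
              field_simp
          _ ≤ α * (n : ℝ) := by
              apply mul_le_mul_of_nonneg_right h (le_of_lt hnposR)
          _ = (n : ℝ) * α := by ring
      · intro h
        rw [hF, div_le_iff₀ hnposR]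
        rw [hbij, hcard]
        linarith
    have hfilter : (Finset.univ.filter (fun τ : G => F τ (V ω) ≤ α))
        = (Finset.univ.filter (fun τ : G =>
            ((Finset.univ.filter (fun σ : G => V ω τ ≤ V ω σ)).card : ℝ) ≤ (n : ℝ) * α)) := by
      apply Finset.filter_congr
      intro τ _
      simpa using hcond τ
    rw [hfilter]
    have := rank_count_le (V ω) ((n : ℝ) * α)
      (le_of_lt (mul_pos hnposR hα0))
    calc ((Finset.univ.filter (fun τ : G =>
            ((Finset.univ.filter (fun σ : G => V ω τ ≤ V ω σ)).card : ℝ) ≤ (n : ℝ) * α)).card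
          : ENNReal)
        = ENNReal.ofReal ((Finset.univ.filter (fun τ : G =>
            ((Finset.univ.filter (fun σ : G => V ω τ ≤ V ω σ)).card : ℝ) ≤ (n : ℝ) * α)).card
          : ℝ) := by rw [ENNReal.ofReal_natCast]
      _ ≤ ENNReal.ofReal ((n : ℝ) * α) := ENNReal.ofReal_le_ofReal this
  -- integrate
  have hmain : (n : ENNReal) * μ (E 1) ≤ (n : ENNReal) * ENNReal.ofReal α := by
    have h1 : ∑ τ : G, μ (E τ) = (n : ENNReal) * μ (E 1) := by
      have : ∀ τ : G, μ (E τ) = μ (E 1) := hkey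
      simp [this, Finset.sum_const, hn, nsmul_eq_mul]
    have h2 : ∑ τ : G, μ (E τ)
        = ∫⁻ ω, (∑ τ : G, (E τ).indicator (fun _ => (1 : ENNReal)) ω) ∂μ := by
      rw [lintegral_finset_sum]
      · apply Finset.sum_congr rfl
        intro τ _
        exact (lintegral_indicator_one (hEmeas τ)).symm
      · intro τ _
        exact measurable_const.indicator (hEmeas τ)
    have h3 : (∫⁻ ω, (∑ τ : G, (E τ).indicator (fun _ => (1 : ENNReal)) ω) ∂μ)
        ≤ ∫⁻ _, ENNReal.ofReal ((n : ℝ) * α) ∂μ := lintegral_mono hpt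
    have h4 : (∫⁻ _ : Ω, ENNReal.ofReal ((n : ℝ) * α) ∂μ)
        = (n : ENNReal) * ENNReal.ofReal α := by
      rw [lintegral_const, measure_univ, mul_one,
        ENNReal.ofReal_mul (le_of_lt hnposR), ENNReal.ofReal_natCast]
    calc (n : ENNReal) * μ (E 1) = ∑ τ : G, μ (E τ) := h1.symm
      _ ≤ (n : ENNReal) * ENNReal.ofReal α := h4 ▸ (h2 ▸ h3)
  have hne : (n : ENNReal) ≠ 0 := by exact_mod_cast hnpos.ne'
  have hfin : (n : ENNReal) ≠ ⊤ := ENNReal.natCast_ne_top n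
  have hfinal : μ (E 1) ≤ ENNReal.ofReal α :=
    (ENNReal.mul_le_mul_iff_right hne hfin).mp hmain
  have hset : {ω | (∑ π : G, (if s π ω ≥ s 1 ω then (1 : ℝ) else 0)) / (Fintype.card G : ℝ) ≤ α}
      = E 1 := by
    ext ω
    simp [hE, hF, hV, one_mul, hn]
  rw [hset]
  exact hfinal
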